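/- Given $n$ points in the plane, the number of incidences between the $n$ points and the set of all $k$-rich lines ($k \ge 2$) is $O(n^2/k^2 + n)$. -/

import Mathlib

/-- `L` is a line in the plane (as a set of points). -/
def IsLine (L : Set (Fin 2 → ℝ)) : Prop :=
  ∃ p v : Fin 2 → ℝ, v ≠ 0 ∧ L = {x | ∃ t : ℝ, x = p + t • v}


lemma line_through {L : Set (Fin 2 → ℝ)} (hL : IsLine L) {p q : Fin 2 → ℝ}
    (hp : p ∈ L) (hq : q ∈ L) (hpq : p ≠ q) :
    L = {x | ∃ t : ℝ, x = p + t • (q - p)} := by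
  obtain ⟨a, v, hv, rfl⟩ := hL
  obtain ⟨s, rfl⟩ := hp
  obtain ⟨u, hu⟩ := hq
  have hsu : u - s ≠ 0 := by
    intro h
    apply hpq
    rw [hu, sub_eq_zero.mp h]
  have hqp : q - (a + s • v) = (u - s) • v := by
    rw [hu]; module
  ext x
  constructor
  · rintro ⟨t, rfl⟩
    exact ⟨(t - s)/(u - s), by rw [hqp, smul_smul, div_mul_cancel₀ _ hsu]; module⟩
  · rintro ⟨t, rfl⟩
    exact ⟨s + t*(u-s), by rw [hqp, smul_smul]; module⟩

lemma line_unique {L₁ L₂ : Set (Fin 2 → ℝ)} (h₁ : IsLine L₁) (h₂ : IsLine L₂)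
    {p q : Fin 2 → ℝ} (hp₁ : p ∈ L₁) (hq₁ : q ∈ L₁) (hp₂ : p ∈ L₂) (hq₂ : q ∈ L₂)
    (hpq : p ≠ q) : L₁ = L₂ := by
  rw [line_through h₁ hp₁ hq₁ hpq, line_through h₂ hp₂ hq₂ hpq]

lemma line_inter_subsingleton {L₁ L₂ : Set (Fin 2 → ℝ)} (h₁ : IsLine L₁) (h₂ : IsLine L₂)
    (hne : L₁ ≠ L₂) : (L₁ ∩ L₂).Subsingleton := by
  intro p hp q hq
  by_contra hpq
  exact hne (line_unique h₁ h₂ hp.1 hq.1 hp.2 hq.2 hpq)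


lemma rich_finite {S : Set (Fin 2 → ℝ)} (hS : S.Finite) :
    {L | IsLine L ∧ 2 ≤ (S ∩ L).ncard}.Finite := by
  classical
  set f : Set (Fin 2 → ℝ) → (Fin 2 → ℝ) × (Fin 2 → ℝ) := fun L =>
    if h : ∃ pq : (Fin 2 → ℝ) × (Fin 2 → ℝ), (pq.1 ∈ S ∩ L ∧ pq.2 ∈ S ∩ L) ∧ pq.1 ≠ pq.2
    then h.choose else 0 with hf
  have key : ∀ L ∈ {L | IsLine L ∧ 2 ≤ (S ∩ L).ncard},
      ((f L).1 ∈ S ∩ L ∧ (f L).2 ∈ S ∩ L) ∧ (f L).1 ≠ (f L).2 := by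
    rintro L ⟨hL, hcard⟩
    have hfin : (S ∩ L).Finite := hS.subset Set.inter_subset_left
    have h2 : 1 < (S ∩ L).ncard := hcard
    obtain ⟨a, b, ha, hb, hab⟩ := (Set.one_lt_ncard_iff hfin).mp h2
    have hex : ∃ pq : (Fin 2 → ℝ) × (Fin 2 → ℝ),
        (pq.1 ∈ S ∩ L ∧ pq.2 ∈ S ∩ L) ∧ pq.1 ≠ pq.2 := ⟨(a, b), ⟨ha, hb⟩, hab⟩
    simp only [hf, dif_pos hex]
    exact hex.choose_spec
  apply Set.Finite.of_finite_image (f := f)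
  · apply (hS.prod hS).subset
    rintro _ ⟨L, hL, rfl⟩
    exact ⟨(key L hL).1.1.1, (key L hL).1.2.1⟩
  · intro L₁ h₁ L₂ h₂ hfe
    obtain ⟨⟨hp₁, hq₁⟩, hne⟩ := key L₁ h₁
    obtain ⟨⟨hp₂, hq₂⟩, -⟩ := key L₂ h₂
    rw [← hfe] at hp₂ hq₂
    exact line_unique h₁.1 h₂.1 hp₁.2 hq₁.2 hp₂.2 hq₂.2 hne


lemma sum_cube_le (k : ℕ) (hk : 1 ≤ k) (M : ℕ) :
    ∑ m ∈ Finset.Ioc k M, (1 : ℝ) / (m : ℝ) ^ 3 ≤ 1 / (2 * (k : ℝ) ^ 2) := by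
  have hk0 : (0:ℝ) < (k:ℝ) := by exact_mod_cast hk
  rcases le_or_gt M k with h | h
  · rw [Finset.Ioc_eq_empty (by omega)]
    positivity
  · have main : ∀ M, k ≤ M →
        ∑ m ∈ Finset.Ioc k M, (1 : ℝ) / (m : ℝ) ^ 3 ≤
          1 / (2 * (k : ℝ) ^ 2) - 1 / (2 * (M : ℝ) ^ 2) := by
      intro M hM
      induction M, hM using Nat.le_induction with
      | base => simp
      | succ M hM ih =>
        rw [Finset.sum_Ioc_succ_top hM]
        have hM0 : (0:ℝ) < (M:ℝ) := lt_of_lt_of_le hk0 (by exact_mod_cast hM)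
        have step : (1:ℝ) / ((M:ℝ)+1) ^ 3 ≤ 1 / (2*(M:ℝ)^2) - 1 / (2*((M:ℝ)+1)^2) := by
          rw [div_sub_div _ _ (by positivity) (by positivity), div_le_div_iff₀ (by positivity) (by positivity)]
          ring_nf
          nlinarith [hM0]
        push_cast
        linarith [ih]
    calc _ ≤ _ := main M h.le
    _ ≤ 1 / (2 * (k : ℝ) ^ 2) := by
        have hM0 : (0:ℝ) < (M:ℝ) := lt_of_lt_of_le hk0 (by exact_mod_cast h.le)
        have : (0:ℝ) ≤ 1 / (2 * (M:ℝ) ^ 2) := by positivity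
        linarith


set_option maxHeartbeats 2000000 in
theorem stmt13 (C : ℝ) (hC : 0 < C)
    (hST : ∀ (S : Set (Fin 2 → ℝ)), S.Finite → ∀ k : ℕ, 2 ≤ k →
      ({L : Set (Fin 2 → ℝ) | IsLine L ∧ k ≤ (S ∩ L).ncard}.ncard : ℝ) ≤
        C * ((S.ncard : ℝ) ^ 2 / (k : ℝ) ^ 3 + (S.ncard : ℝ) / (k : ℝ))) :
    ∃ C' : ℝ, 0 < C' ∧
      ∀ (S : Set (Fin 2 → ℝ)), S.Finite → ∀ (n : ℕ), S.ncard = n →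
        ∀ k : ℕ, 2 ≤ k →
        ({I : (Fin 2 → ℝ) × Set (Fin 2 → ℝ) |
            I.1 ∈ S ∧ IsLine I.2 ∧ k ≤ (S ∩ I.2).ncard ∧ I.1 ∈ I.2}.ncard : ℝ) ≤
          C' * ((n : ℝ) ^ 2 / (k : ℝ) ^ 2 + (n : ℝ)) := by
  classical
  refine ⟨4 * C ^ 2 + 2 * C + 1, by positivity, ?_⟩
  intro S hS n hn k hk
  have hk0 : (0:ℝ) < (k:ℝ) := by
    have : 0 < k := by omega
    exact_mod_cast this
  set Sf : Finset (Fin 2 → ℝ) := hS.toFinset with hSfdef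
  have hSfc : Sf.card = n := by
    rw [← hn, Set.ncard_eq_toFinset_card S hS]
  set r : Set (Fin 2 → ℝ) → ℕ := fun L => (Sf.filter (· ∈ L)).card with hrdef
  have hr : ∀ L, (S ∩ L).ncard = r L := by
    intro L
    have : S ∩ L = ↑(Sf.filter (· ∈ L)) := by
      ext x
      simp [hSfdef, Set.Finite.mem_toFinset]
    rw [this, Set.ncard_coe_finset]
  -- the finset of k-rich lines
  have hNfin : ∀ m : ℕ, 2 ≤ m → {L | IsLine L ∧ m ≤ (S ∩ L).ncard}.Finite := by
    intro m hm
    exact (rich_finite hS).subset (fun L hL => ⟨hL.1, le_trans hm hL.2⟩)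
  set 𝔏 : Finset (Set (Fin 2 → ℝ)) := (hNfin k hk).toFinset with h𝔏def
  have h𝔏mem : ∀ L, L ∈ 𝔏 ↔ IsLine L ∧ k ≤ (S ∩ L).ncard := by
    intro L
    simp [h𝔏def, Set.Finite.mem_toFinset]
  -- cardinality of rich-line finsets via hST
  have hNcard : ∀ m : ℕ, 2 ≤ m → ∀ 𝔅 : Finset (Set (Fin 2 → ℝ)),
      (∀ L ∈ 𝔅, IsLine L ∧ m ≤ (S ∩ L).ncard) →
      (𝔅.card : ℝ) ≤ C * ((n : ℝ) ^ 2 / (m : ℝ) ^ 3 + (n : ℝ) / (m : ℝ)) := by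
    intro m hm 𝔅 h𝔅
    have hsub : ↑𝔅 ⊆ {L : Set (Fin 2 → ℝ) | IsLine L ∧ m ≤ (S ∩ L).ncard} := by
      intro L hL
      exact h𝔅 L hL
    have : (𝔅.card : ℝ) ≤ ({L : Set (Fin 2 → ℝ) | IsLine L ∧ m ≤ (S ∩ L).ncard}.ncard : ℝ) := by
      rw [← Set.ncard_coe_finset 𝔅]
      exact_mod_cast Nat.cast_le.mpr (Set.ncard_le_ncard hsub (hNfin m hm))
    calc (𝔅.card : ℝ) ≤ _ := this
      _ ≤ _ := by rw [← hn]; exact hST S hS m hm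
  -- incidence count = sum of richness over rich lines
  have hI : ({I : (Fin 2 → ℝ) × Set (Fin 2 → ℝ) |
      I.1 ∈ S ∧ IsLine I.2 ∧ k ≤ (S ∩ I.2).ncard ∧ I.1 ∈ I.2}.ncard) = ∑ L ∈ 𝔏, r L := by
    have hset : {I : (Fin 2 → ℝ) × Set (Fin 2 → ℝ) |
        I.1 ∈ S ∧ IsLine I.2 ∧ k ≤ (S ∩ I.2).ncard ∧ I.1 ∈ I.2} =
        ↑(𝔏.biUnion (fun L => (Sf.filter (· ∈ L)).image (fun p => (p, L)))) := by
      ext ⟨p, L⟩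
      simp only [Set.mem_setOf_eq, Finset.coe_biUnion, Set.mem_iUnion, Finset.mem_coe,
        Finset.mem_image, Finset.mem_filter, h𝔏mem]
      constructor
      · rintro ⟨hp, hL, hk', hpL⟩
        exact ⟨L, ⟨hL, hk'⟩, p, ⟨by simp [hSfdef, Set.Finite.mem_toFinset, hp], hpL⟩, rfl⟩
      · rintro ⟨L', hL', p', ⟨hp', hpL'⟩, heq⟩
        rw [Prod.mk.injEq] at heq
        obtain ⟨h1, h2⟩ := heq
        subst h1; subst h2
        exact ⟨by simpa [hSfdef, Set.Finite.mem_toFinset] using hp', hL'.1, hL'.2, hpL'⟩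
    rw [hset, Set.ncard_coe_finset]
    rw [Finset.card_biUnion]
    · apply Finset.sum_congr rfl
      intro L hL
      rw [Finset.card_image_of_injective _ (fun a b hab => by
        simpa using congrArg Prod.fst hab)]
    · intro L₁ h₁ L₂ h₂ hne
      simp only [Finset.disjoint_left, Finset.mem_image]
      rintro ⟨p, L⟩ ⟨p₁, hp₁, heq₁⟩ ⟨p₂, hp₂, heq₂⟩
      apply hne
      rw [Prod.mk.injEq] at heq₁ heq₂
      rw [heq₁.2, heq₂.2]
  rw [hI]
  set M : ℕ := max k (Nat.sqrt n) with hMdef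
  have hkM : k ≤ M := le_max_left _ _
  set A := 𝔏.filter (fun L => r L ≤ M) with hAdef
  set B := 𝔏.filter (fun L => ¬ (r L ≤ M)) with hBdef
  have hsplit : ∑ L ∈ 𝔏, r L = ∑ L ∈ A, r L + ∑ L ∈ B, r L :=
    (Finset.sum_filter_add_sum_filter_not 𝔏 _ _).symm
  -- A part: exact layer-cake decomposition
  have hA1 : ∀ L ∈ A, r L = k + ((Finset.Ioc k M).filter (· ≤ r L)).card := by
    intro L hL
    rw [hAdef, Finset.mem_filter] at hL
    have hkr : k ≤ r L := by rw [← hr]; exact ((h𝔏mem L).mp hL.1).2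
    have hrM : r L ≤ M := hL.2
    have hfil : (Finset.Ioc k M).filter (· ≤ r L) = Finset.Ioc k (r L) := by
      ext m
      simp only [Finset.mem_filter, Finset.mem_Ioc]
      omega
    rw [hfil, Nat.card_Ioc]
    omega
  have hAsum : ∑ L ∈ A, r L
      = k * A.card + ∑ m ∈ Finset.Ioc k M, (A.filter (fun L => m ≤ r L)).card := by
    rw [Finset.sum_congr rfl hA1, Finset.sum_add_distrib, Finset.sum_const, smul_eq_mul,
      mul_comm]
    congr 1
    simp only [Finset.card_filter]
    exact Finset.sum_comm
  have hAcard : (A.card : ℝ) ≤ C * ((n:ℝ)^2/(k:ℝ)^3 + (n:ℝ)/(k:ℝ)) := by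
    apply hNcard k hk
    intro L hL
    exact (h𝔏mem L).mp (Finset.mem_filter.mp hL).1
  have hmid : ∀ m ∈ Finset.Ioc k M,
      ((A.filter (fun L => m ≤ r L)).card : ℝ) ≤ 2*C*(n:ℝ)^2 * (1/(m:ℝ)^3) := by
    intro m hm
    rw [Finset.mem_Ioc] at hm
    have hm2 : 2 ≤ m := by omega
    have hm0 : (0:ℝ) < (m:ℝ) := by exact_mod_cast (by omega : 0 < m)
    have hmsqrt : m ≤ Nat.sqrt n := by
      rcases max_cases k (Nat.sqrt n) with ⟨hMeq, hge⟩ | ⟨hMeq, hge⟩ <;> omega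
    have hmm : (m:ℝ)^2 ≤ (n:ℝ) := by
      have h1 : m * m ≤ n := Nat.le_sqrt.mp hmsqrt
      have := (Nat.cast_le (α := ℝ)).mpr h1
      push_cast at this
      nlinarith [this]
    have hb := hNcard m hm2 (A.filter (fun L => m ≤ r L)) ?_
    · have hdiv : (n:ℝ)/(m:ℝ) ≤ (n:ℝ)^2/(m:ℝ)^3 := by
        rw [div_le_div_iff₀ (by positivity) (by positivity)]
        nlinarith [mul_le_mul_of_nonneg_left hmm (by positivity : (0:ℝ) ≤ (n:ℝ)*(m:ℝ))]
      calc ((A.filter (fun L => m ≤ r L)).card : ℝ) ≤ _ := hb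
        _ ≤ C * ((n:ℝ)^2/(m:ℝ)^3 + (n:ℝ)^2/(m:ℝ)^3) := by nlinarith [hdiv]
        _ = 2*C*(n:ℝ)^2 * (1/(m:ℝ)^3) := by ring
    · intro L hL
      rw [Finset.mem_filter] at hL
      refine ⟨((h𝔏mem L).mp (Finset.mem_filter.mp hL.1).1).1, ?_⟩
      rw [hr]
      exact hL.2
  have hmidsum : ((∑ m ∈ Finset.Ioc k M, (A.filter (fun L => m ≤ r L)).card : ℕ) : ℝ)
      ≤ C * ((n:ℝ)^2 / (k:ℝ)^2) := by
    push_cast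
    calc (∑ m ∈ Finset.Ioc k M, ((A.filter (fun L => m ≤ r L)).card : ℝ))
        ≤ ∑ m ∈ Finset.Ioc k M, 2*C*(n:ℝ)^2 * (1/(m:ℝ)^3) := Finset.sum_le_sum hmid
      _ = 2*C*(n:ℝ)^2 * ∑ m ∈ Finset.Ioc k M, (1/(m:ℝ)^3) := by rw [Finset.mul_sum]
      _ ≤ 2*C*(n:ℝ)^2 * (1/(2*(k:ℝ)^2)) := by
          apply mul_le_mul_of_nonneg_left (sum_cube_le k (by omega) M) (by positivity)
      _ = C * ((n:ℝ)^2 / (k:ℝ)^2) := by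
          field_simp
  -- B part
  have hBrich : ∀ L ∈ B, IsLine L ∧ (M+1) ≤ (S ∩ L).ncard := by
    intro L hL
    rw [hBdef, Finset.mem_filter] at hL
    exact ⟨((h𝔏mem L).mp hL.1).1, by rw [hr]; omega⟩
  have hBcard : (B.card : ℝ) ≤ C * ((n:ℝ)^2/((M:ℝ)+1)^3 + (n:ℝ)/((M:ℝ)+1)) := by
    have h := hNcard (M+1) (by omega) B hBrich
    push_cast at h
    exact h
  have hnM : (n : ℝ) ≤ ((M:ℝ)+1)^2 := by
    have h1 : n < (Nat.sqrt n + 1) * (Nat.sqrt n + 1) := Nat.lt_succ_sqrt n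
    have h2 : Nat.sqrt n ≤ M := le_max_right _ _
    have h3 : n ≤ (M+1) * (M+1) := le_trans h1.le (Nat.mul_le_mul (by omega) (by omega))
    have := (Nat.cast_le (α := ℝ)).mpr h3
    push_cast at this
    nlinarith [this]
  have hBsq : (B.card : ℝ) * (B.card : ℝ) ≤ 4*C^2*(n:ℝ) := by
    have hM1 : (0:ℝ) < (M:ℝ)+1 := by positivity
    have hn0 : (0:ℝ) ≤ (n:ℝ) := Nat.cast_nonneg n
    have h1 : (n:ℝ)^2/((M:ℝ)+1)^3 ≤ (n:ℝ)/((M:ℝ)+1) := by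
      rw [div_le_div_iff₀ (by positivity) (by positivity)]
      nlinarith [mul_le_mul_of_nonneg_left hnM (mul_nonneg hn0 hM1.le)]
    have h2 : (B.card:ℝ) ≤ 2*C*((n:ℝ)/((M:ℝ)+1)) := by
      have hxy : (n:ℝ)^2/((M:ℝ)+1)^3 + (n:ℝ)/((M:ℝ)+1) ≤ 2*((n:ℝ)/((M:ℝ)+1)) := by
        linarith [h1]
      have := mul_le_mul_of_nonneg_left hxy hC.le
      calc (B.card:ℝ) ≤ _ := hBcard
        _ ≤ C * (2*((n:ℝ)/((M:ℝ)+1))) := this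
        _ = 2*C*((n:ℝ)/((M:ℝ)+1)) := by ring
    have h3 : (0:ℝ) ≤ (B.card:ℝ) := Nat.cast_nonneg _
    have hy0 : (0:ℝ) ≤ (n:ℝ)/((M:ℝ)+1) := div_nonneg hn0 hM1.le
    have h4 : (n:ℝ)/((M:ℝ)+1) * ((n:ℝ)/((M:ℝ)+1)) ≤ (n:ℝ) := by
      have h5 : (n:ℝ)/((M:ℝ)+1) ≤ (M:ℝ)+1 := by
        rw [div_le_iff₀ hM1]
        calc (n:ℝ) ≤ ((M:ℝ)+1)^2 := hnM
          _ = ((M:ℝ)+1)*((M:ℝ)+1) := by ring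
      calc (n:ℝ)/((M:ℝ)+1) * ((n:ℝ)/((M:ℝ)+1)) ≤ ((M:ℝ)+1) * ((n:ℝ)/((M:ℝ)+1)) :=
          mul_le_mul_of_nonneg_right h5 hy0
        _ = (n:ℝ) := by field_simp
    calc (B.card:ℝ) * (B.card:ℝ)
        ≤ (2*C*((n:ℝ)/((M:ℝ)+1))) * (2*C*((n:ℝ)/((M:ℝ)+1))) :=
          mul_le_mul h2 h2 h3 (by positivity)
      _ = 4*C^2 * ((n:ℝ)/((M:ℝ)+1) * ((n:ℝ)/((M:ℝ)+1))) := by ring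
      _ ≤ 4*C^2 * (n:ℝ) := mul_le_mul_of_nonneg_left h4 (by positivity)
  have hdswap : ∑ L ∈ B, r L = ∑ p ∈ Sf, (B.filter (fun L => p ∈ L)).card := by
    simp only [hrdef, Finset.card_filter]
    exact Finset.sum_comm
  have hmulsub : ∀ e : ℕ, e * (e - 1) = e * e - e := by
    intro e
    cases e with
    | zero => simp
    | succ f =>
      rw [Nat.add_sub_cancel, Nat.mul_succ, Nat.add_sub_cancel]
  have hdle : ∀ p : Fin 2 → ℝ, (B.filter (fun L => p ∈ L)).card
      ≤ 1 + (B.filter (fun L => p ∈ L)).card * ((B.filter (fun L => p ∈ L)).card - 1) := by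
    intro p
    set e := (B.filter (fun L => p ∈ L)).card
    rcases Nat.eq_zero_or_pos e with h | h
    · simp [h]
    · have := Nat.le_mul_of_pos_left (e - 1) h
      omega
  have hpair : ∑ p ∈ Sf, (B.filter (fun L => p ∈ L)).card * ((B.filter (fun L => p ∈ L)).card - 1)
      ≤ B.card * B.card := by
    have hod : ∀ p : Fin 2 → ℝ, (B.filter (fun L => p ∈ L)).card * ((B.filter (fun L => p ∈ L)).card - 1)
        = ((B.filter (fun L => p ∈ L)).offDiag).card := by
      intro p
      rw [Finset.offDiag_card, hmulsub]
    calc ∑ p ∈ Sf, (B.filter (fun L => p ∈ L)).card * ((B.filter (fun L => p ∈ L)).card - 1)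
        = ∑ p ∈ Sf, ((B.filter (fun L => p ∈ L)).offDiag).card := Finset.sum_congr rfl (fun p _ => hod p)
      _ = (Sf.sigma (fun p => (B.filter (fun L => p ∈ L)).offDiag)).card := (Finset.card_sigma _ _).symm
      _ ≤ (B ×ˢ B).card := ?_
      _ = B.card * B.card := Finset.card_product _ _
    apply Finset.card_le_card_of_injOn (fun x => x.2)
    · rintro ⟨p, L₁, L₂⟩ hx
      rw [Finset.mem_coe, Finset.mem_sigma] at hx
      obtain ⟨hp, hLL⟩ := hx
      rw [Finset.mem_offDiag] at hLL
      exact Finset.mem_product.mpr ⟨(Finset.mem_filter.mp hLL.1).1, (Finset.mem_filter.mp hLL.2.1).1⟩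
    · rintro ⟨p, L₁, L₂⟩ hx ⟨q, L₁', L₂'⟩ hy heq
      simp only at heq
      simp only [Finset.mem_coe, Finset.mem_sigma, Finset.mem_offDiag] at hx hy
      obtain ⟨hp, hx1, hx2, hx3⟩ := hx
      obtain ⟨hq, hy1, hy2, hy3⟩ := hy
      rw [Prod.mk.injEq] at heq
      obtain ⟨e1, e2⟩ := heq
      subst e1; subst e2
      have hIsLine1 : IsLine L₁ := ((h𝔏mem L₁).mp (Finset.mem_filter.mp (Finset.mem_filter.mp hx1).1).1).1
      have hIsLine2 : IsLine L₂ := ((h𝔏mem L₂).mp (Finset.mem_filter.mp (Finset.mem_filter.mp hx2).1).1).1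
      have hpq : p = q := by
        apply line_inter_subsingleton hIsLine1 hIsLine2 hx3
        · exact ⟨(Finset.mem_filter.mp hx1).2, (Finset.mem_filter.mp hx2).2⟩
        · exact ⟨(Finset.mem_filter.mp hy1).2, (Finset.mem_filter.mp hy2).2⟩
      subst hpq
      rfl
  have hB : ((∑ L ∈ B, r L : ℕ) : ℝ) ≤ (n:ℝ) + 4*C^2*(n:ℝ) := by
    have h1 : ∑ L ∈ B, r L ≤ Sf.card + ∑ p ∈ Sf, (B.filter (fun L => p ∈ L)).card * ((B.filter (fun L => p ∈ L)).card - 1) := by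
      rw [hdswap]
      calc ∑ p ∈ Sf, (B.filter (fun L => p ∈ L)).card
          ≤ ∑ p ∈ Sf, (1 + (B.filter (fun L => p ∈ L)).card * ((B.filter (fun L => p ∈ L)).card - 1)) :=
            Finset.sum_le_sum (fun p _ => hdle p)
        _ = Sf.card + _ := by rw [Finset.sum_add_distrib, Finset.sum_const, smul_eq_mul, mul_one]
    have h2 : ∑ L ∈ B, r L ≤ n + B.card * B.card := by
      calc ∑ L ∈ B, r L ≤ _ := h1
        _ ≤ Sf.card + B.card * B.card := Nat.add_le_add_left hpair _
        _ = n + B.card * B.card := by rw [hSfc]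
    calc ((∑ L ∈ B, r L : ℕ) : ℝ) ≤ ((n + B.card * B.card : ℕ) : ℝ) := by exact_mod_cast h2
      _ = (n:ℝ) + (B.card:ℝ)*(B.card:ℝ) := by push_cast; ring
      _ ≤ (n:ℝ) + 4*C^2*(n:ℝ) := by linarith [hBsq]
  -- final assembly
  have hn0 : (0:ℝ) ≤ (n:ℝ) := Nat.cast_nonneg n
  have hcast : ((∑ L ∈ 𝔏, r L : ℕ) : ℝ)
      = (k:ℝ) * (A.card:ℝ)
        + ((∑ m ∈ Finset.Ioc k M, (A.filter (fun L => m ≤ r L)).card : ℕ):ℝ)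
        + ((∑ L ∈ B, r L : ℕ):ℝ) := by
    rw [hsplit, hAsum]
    push_cast
    ring
  rw [hcast]
  have hka : (k:ℝ) * (A.card:ℝ) ≤ C * ((n:ℝ)^2/(k:ℝ)^2 + (n:ℝ)) := by
    have h := mul_le_mul_of_nonneg_left hAcard hk0.le
    calc (k:ℝ) * (A.card:ℝ) ≤ (k:ℝ) * (C * ((n:ℝ)^2/(k:ℝ)^3 + (n:ℝ)/(k:ℝ))) := h
      _ = C * ((n:ℝ)^2/(k:ℝ)^2 + (n:ℝ)) := by
        field_simp
  have hX : (0:ℝ) ≤ (n:ℝ)^2/(k:ℝ)^2 := by positivity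
  nlinarith [hka, hmidsum, hB, mul_nonneg hC.le hX, mul_nonneg hC.le hn0,
    mul_nonneg (mul_nonneg hC.le hC.le) hX, mul_nonneg (mul_nonneg hC.le hC.le) hn0]
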